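/- Let m, n ≥ 0, let γ ∈ DP(m,n), and suppose the pair (A, B), with A ∈ Mat_{n×m}(ℂ) and B ∈ Mat_{m×n}(ℂ) and B A nilpotent, lies in the (GL_m(ℂ) × GL_n(ℂ))-orbit of the direct sum of the elementary pairs attached to γ. Then for every integer j ≥ 0, rank((B A)^j) = Σ_{(x,y)^ε ∈ γ} max(x − j, 0) and rank((A B)^j) = Σ_{(x,y)^ε ∈ γ} max(y − j, 0), where the sums range over the decorated pairs of γ counted with multiplicity. In particular, the multiset of Jordan block sizes of the nilpotent matrix B A is μ₁†(γ) and that of A B is μ₂†(γ). -/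

import Mathlib

open Matrix
open scoped MatrixGroups

/-- A decorated pair of non-negative integers: `AB j` encodes the pair `(j+1, j)`
(type `(k, k-1)` with `k = j+1`), `BA j` encodes `(j, j+1)` (type `(k-1, k)`),
`P j` encodes `(j+1, j+1)⁺` and `M j` encodes `(j+1, j+1)⁻`. -/
inductive DPair : Type
  | AB : ℕ → DPair
  | BA : ℕ → DPair
  | P : ℕ → DPair
  | M : ℕ → DPair
deriving DecidableEq

namespace DPair

/-- The first coordinate of a decorated pair. -/
def a : DPair → ℕ
  | AB j => j + 1
  | BA j => j
  | P j => j + 1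
  | M j => j + 1

/-- The second coordinate of a decorated pair. -/
def b : DPair → ℕ
  | AB j => j
  | BA j => j + 1
  | P j => j + 1
  | M j => j + 1

end DPair

/-- The `a × b` matrix with `1`s on the main diagonal (entries `(i,i)`) and `0`
elsewhere. -/
def diagOne (a b : ℕ) : Matrix (Fin a) (Fin b) ℂ :=
  fun i j => if (i : ℕ) = (j : ℕ) then 1 else 0

/-- The `a × b` matrix with `1`s on the subdiagonal (entries `(i+1,i)`) and `0`
elsewhere. -/
def subDiag (a b : ℕ) : Matrix (Fin a) (Fin b) ℂ :=
  fun i j => if (i : ℕ) = (j : ℕ) + 1 then 1 else 0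

/-- The first matrix `A` of the elementary pair attached to a decorated pair. -/
def elemA : (p : DPair) → Matrix (Fin p.b) (Fin p.a) ℂ
  | .AB _ => diagOne _ _
  | .BA _ => subDiag _ _
  | .P _ => diagOne _ _
  | .M _ => subDiag _ _

/-- The second matrix `B` of the elementary pair attached to a decorated pair. -/
def elemB : (p : DPair) → Matrix (Fin p.a) (Fin p.b) ℂ
  | .AB _ => subDiag _ _
  | .BA _ => diagOne _ _
  | .P _ => subDiag _ _
  | .M _ => diagOne _ _

/-- Block-diagonal direct sum of two rectangular matrices. -/
def dsum {b₁ a₁ b₂ a₂ : ℕ} (M₁ : Matrix (Fin b₁) (Fin a₁) ℂ)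
    (M₂ : Matrix (Fin b₂) (Fin a₂) ℂ) :
    Matrix (Fin (b₁ + b₂)) (Fin (a₁ + a₂)) ℂ :=
  Matrix.reindex finSumFinEquiv finSumFinEquiv (Matrix.fromBlocks M₁ 0 0 M₂)

/-- The direct sum, over a list of decorated pairs, of the first matrices of the
corresponding elementary pairs. -/
def listA : (l : List DPair) → Matrix (Fin (l.map DPair.b).sum) (Fin (l.map DPair.a).sum) ℂ
  | [] => 0
  | p :: t => dsum (elemA p) (listA t)

/-- The direct sum, over a list of decorated pairs, of the second matrices of the
corresponding elementary pairs. -/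
def listB : (l : List DPair) → Matrix (Fin (l.map DPair.a).sum) (Fin (l.map DPair.b).sum) ℂ
  | [] => 0
  | p :: t => dsum (elemB p) (listB t)

/-- Recasting a matrix along equalities of its dimensions. -/
def castMat {r c r' c' : ℕ} (hr : r = r') (hc : c = c') (M : Matrix (Fin r) (Fin c) ℂ) :
    Matrix (Fin r') (Fin c') ℂ :=
  Matrix.reindex (finCongr hr) (finCongr hc) M

/-- `(A', B')` lies in the `GL_m(ℂ) × GL_n(ℂ)`-orbit of `(A, B)` for the action
`(g₁, g₂) · (A, B) = (g₂ A g₁⁻¹, g₁ B g₂⁻¹)`. -/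
def SameOrbit (m n : ℕ) (A : Matrix (Fin n) (Fin m) ℂ) (B : Matrix (Fin m) (Fin n) ℂ)
    (A' : Matrix (Fin n) (Fin m) ℂ) (B' : Matrix (Fin m) (Fin n) ℂ) : Prop :=
  ∃ (g₁ : GL (Fin m) ℂ) (g₂ : GL (Fin n) ℂ),
    A' = (↑g₂ : Matrix (Fin n) (Fin n) ℂ) * A * (↑(g₁⁻¹) : Matrix (Fin m) (Fin m) ℂ) ∧
    B' = (↑g₁ : Matrix (Fin m) (Fin m) ℂ) * B * (↑(g₂⁻¹) : Matrix (Fin n) (Fin n) ℂ)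

/-- The first component `μ₁†` of the moment map: the multiset of first coordinates,
with zero parts discarded. -/
def muA (γ : Multiset DPair) : Multiset ℕ :=
  (γ.map DPair.a).filter (0 < ·)

/-- The second component `μ₂†` of the moment map. -/
def muB (γ : Multiset DPair) : Multiset ℕ :=
  (γ.map DPair.b).filter (0 < ·)

/-- The block-diagonal nilpotent matrix whose Jordan blocks have the sizes listed
in `l`. -/
def listJordan : (l : List ℕ) → Matrix (Fin l.sum) (Fin l.sum) ℂ
  | [] => 0
  | k :: t => dsum (subDiag k k) (listJordan t)

lemma castMat_rfl {r c : ℕ} (M : Matrix (Fin r) (Fin c) ℂ) : castMat rfl rfl M = M := rfl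

lemma castMat_castMat {r c r' c' r'' c'' : ℕ} (h1 : r = r') (h2 : c = c') (h3 : r' = r'') (h4 : c' = c'')
    (M : Matrix (Fin r) (Fin c) ℂ) :
    castMat h3 h4 (castMat h1 h2 M) = castMat (h1.trans h3) (h2.trans h4) M := by
  subst h1 h2 h3 h4; rfl

lemma castMat_mul {r s t r' s' t' : ℕ} (h1 : r = r') (h2 : s = s') (h3 : t = t')
    (M : Matrix (Fin r) (Fin s) ℂ) (N : Matrix (Fin s) (Fin t) ℂ) :
    castMat h1 h2 M * castMat h2 h3 N = castMat h1 h3 (M * N) := by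
  subst h1 h2 h3; rfl

lemma castMat_pow {r r' : ℕ} (h : r = r') (M : Matrix (Fin r) (Fin r) ℂ) (j : ℕ) :
    (castMat h h M) ^ j = castMat h h (M ^ j) := by
  subst h; rfl

lemma rank_castMat {r r' : ℕ} (h h' : r = r') (M : Matrix (Fin r) (Fin r) ℂ) :
    (castMat h h' M).rank = M.rank := by
  subst h; rfl

lemma dsum_cast {b₁ a₁ s t s' t' : ℕ} (M : Matrix (Fin b₁) (Fin a₁) ℂ) (N : Matrix (Fin s) (Fin t) ℂ)
    (h1 : s = s') (h2 : t = t') :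
    dsum M (castMat h1 h2 N) = castMat (by rw [h1]) (by rw [h2]) (dsum M N) := by
  subst h1 h2; rfl

lemma dsum_mul {b₁ a₁ c₁ b₂ a₂ c₂ : ℕ} (M₁ : Matrix (Fin b₁) (Fin a₁) ℂ) (N₁ : Matrix (Fin a₁) (Fin c₁) ℂ)
    (M₂ : Matrix (Fin b₂) (Fin a₂) ℂ) (N₂ : Matrix (Fin a₂) (Fin c₂) ℂ) :
    dsum M₁ M₂ * dsum N₁ N₂ = dsum (M₁ * N₁) (M₂ * N₂) := by
  simp [dsum, Matrix.reindex_apply, Matrix.submatrix_mul_equiv, Matrix.fromBlocks_multiply]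

lemma dsum_one {p q : ℕ} : dsum (1 : Matrix (Fin p) (Fin p) ℂ) (1 : Matrix (Fin q) (Fin q) ℂ) = 1 := by
  simp [dsum, Matrix.reindex_apply, Matrix.fromBlocks_one, Matrix.submatrix_one_equiv]

lemma dsum_pow {p q : ℕ} (M : Matrix (Fin p) (Fin p) ℂ) (N : Matrix (Fin q) (Fin q) ℂ) (j : ℕ) :
    (dsum M N) ^ j = dsum (M ^ j) (N ^ j) := by
  induction j with
  | zero => simp [dsum_one]
  | succ j ih => rw [pow_succ, ih, dsum_mul, ← pow_succ, ← pow_succ]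
lemma diagOne_mul_subDiag (a b c : ℕ) (h : a ≤ b) :
    diagOne a b * subDiag b c = subDiag a c := by
  ext i k
  simp only [Matrix.mul_apply, diagOne, subDiag]
  by_cases hik : (i : ℕ) = (k : ℕ) + 1
  · rw [if_pos hik]
    have hib : (i : ℕ) < b := lt_of_lt_of_le i.2 h
    rw [Finset.sum_eq_single (⟨(i : ℕ), hib⟩ : Fin b)]
    · simp [hik]
    · intro r _ hr
      rw [if_neg, zero_mul]
      intro hir
      exact hr (Fin.ext hir.symm)
    · simp
  · rw [if_neg hik]
    apply Finset.sum_eq_zero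
    intro r _
    by_cases h1 : (i : ℕ) = (r : ℕ)
    · rw [if_pos h1, if_neg (by omega), mul_zero]
    · rw [if_neg h1, zero_mul]

lemma subDiag_mul_diagOne (a b c : ℕ) (h : a ≤ b + 1) :
    subDiag a b * diagOne b c = subDiag a c := by
  ext i k
  simp only [Matrix.mul_apply, diagOne, subDiag]
  by_cases hik : (i : ℕ) = (k : ℕ) + 1
  · rw [if_pos hik]
    have hkb : (k : ℕ) < b := by have := i.2; omega
    rw [Finset.sum_eq_single (⟨(k : ℕ), hkb⟩ : Fin b)]
    · simp [hik]
    · intro r _ hr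
      have hrk : (r : ℕ) ≠ (k : ℕ) := fun hh => hr (Fin.ext hh)
      simp [hrk]
    · simp
  · rw [if_neg hik]
    apply Finset.sum_eq_zero
    intro r _
    by_cases h1 : (i : ℕ) = (r : ℕ) + 1
    · rw [if_pos h1, if_neg (by omega), mul_zero]
    · rw [if_neg h1, zero_mul]
lemma elemB_mul_elemA (p : DPair) : elemB p * elemA p = subDiag p.a p.a := by
  cases p with
  | AB j => exact subDiag_mul_diagOne (j+1) j (j+1) (le_refl _)
  | BA j => exact diagOne_mul_subDiag j (j+1) j (Nat.le_succ j)
  | P j => exact subDiag_mul_diagOne (j+1) (j+1) (j+1) (Nat.le_succ _)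
  | M j => exact diagOne_mul_subDiag (j+1) (j+1) (j+1) (le_refl _)

lemma elemA_mul_elemB (p : DPair) : elemA p * elemB p = subDiag p.b p.b := by
  cases p with
  | AB j => exact diagOne_mul_subDiag j (j+1) j (Nat.le_succ j)
  | BA j => exact subDiag_mul_diagOne (j+1) j (j+1) (le_refl _)
  | P j => exact diagOne_mul_subDiag (j+1) (j+1) (j+1) (le_refl _)
  | M j => exact subDiag_mul_diagOne (j+1) (j+1) (j+1) (Nat.le_succ _)

lemma listB_mul_listA (l : List DPair) : listB l * listA l = listJordan (l.map DPair.a) := by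
  induction l with
  | nil =>
    ext i j
    exact i.elim0
  | cons p t ih =>
    show dsum (elemB p) (listB t) * dsum (elemA p) (listA t) =
      dsum (subDiag p.a p.a) (listJordan (t.map DPair.a))
    rw [dsum_mul, elemB_mul_elemA, ih]

lemma listA_mul_listB (l : List DPair) : listA l * listB l = listJordan (l.map DPair.b) := by
  induction l with
  | nil =>
    ext i j
    exact i.elim0
  | cons p t ih =>
    show dsum (elemA p) (listA t) * dsum (elemB p) (listB t) =
      dsum (subDiag p.b p.b) (listJordan (t.map DPair.b))
    rw [dsum_mul, elemA_mul_elemB, ih]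

lemma subDiag_pow (k j : ℕ) (i c : Fin k) :
    ((subDiag k k) ^ j) i c = if (i : ℕ) = (c : ℕ) + j then 1 else 0 := by
  induction j generalizing i c with
  | zero => simp [Matrix.one_apply, Fin.ext_iff]
  | succ j ih =>
    rw [pow_succ, Matrix.mul_apply]
    simp only [ih, subDiag]
    by_cases hic : (i : ℕ) = (c : ℕ) + (j + 1)
    · rw [if_pos hic]
      have hc1 : (c : ℕ) + 1 < k := by have := i.2; omega
      rw [Finset.sum_eq_single (⟨(c : ℕ) + 1, hc1⟩ : Fin k)]
      · simp; omega
      · intro r _ hr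
        have : (r : ℕ) ≠ (c : ℕ) + 1 := fun hh => hr (Fin.ext hh)
        simp [this]
      · simp
    · rw [if_neg hic]
      apply Finset.sum_eq_zero
      intro r _
      by_cases h1 : (i : ℕ) = (r : ℕ) + j
      · rw [if_pos h1, if_neg (by omega), mul_zero]
      · rw [if_neg h1, zero_mul]
/-- The product of two submodules is linearly equivalent to their product as modules. -/
def submoduleProdLEquiv {R M N : Type*} [CommRing R] [AddCommGroup M] [AddCommGroup N]
    [Module R M] [Module R N] (P : Submodule R M) (Q : Submodule R N) :
    (P.prod Q) ≃ₗ[R] P × Q where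
  toFun x := (⟨(x : M × N).1, x.2.1⟩, ⟨(x : M × N).2, x.2.2⟩)
  invFun y := ⟨(y.1.1, y.2.1), ⟨y.1.2, y.2.2⟩⟩
  map_add' _ _ := rfl
  map_smul' _ _ := rfl
  left_inv _ := rfl
  right_inv _ := rfl

lemma rank_fromBlocksDiag {p q : ℕ} (M : Matrix (Fin p) (Fin p) ℂ) (N : Matrix (Fin q) (Fin q) ℂ) :
    (Matrix.fromBlocks M 0 0 N).rank = M.rank + N.rank := by
  classical
  set e := LinearEquiv.sumArrowLequivProdArrow (Fin p) (Fin q) ℂ ℂ with he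
  have hcomp : (Matrix.fromBlocks M (0 : Matrix (Fin p) (Fin q) ℂ)
      (0 : Matrix (Fin q) (Fin p) ℂ) N).mulVecLin =
      (e.symm : ((Fin p → ℂ) × (Fin q → ℂ)) →ₗ[ℂ] (Fin p ⊕ Fin q → ℂ)).comp
        (((M.mulVecLin).prodMap (N.mulVecLin)).comp (e : (Fin p ⊕ Fin q → ℂ) →ₗ[ℂ] _)) := by
    apply LinearMap.ext
    intro v
    funext x
    cases x with
    | inl i =>
      simp [Matrix.mulVecLin_apply, Matrix.fromBlocks_mulVec, e,
        LinearEquiv.sumArrowLequivProdArrow, Equiv.sumArrowEquivProdArrow]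
    | inr i =>
      simp [Matrix.mulVecLin_apply, Matrix.fromBlocks_mulVec, e,
        LinearEquiv.sumArrowLequivProdArrow, Equiv.sumArrowEquivProdArrow]
  have hrange : LinearMap.range ((M.mulVecLin).prodMap (N.mulVecLin)) =
      (LinearMap.range M.mulVecLin).prod (LinearMap.range N.mulVecLin) := by
    ext ⟨x, y⟩
    simp only [LinearMap.mem_range, Submodule.mem_prod, LinearMap.prodMap_apply, Prod.mk.injEq,
      Prod.exists]
    constructor
    · rintro ⟨u, w, hu, hw⟩
      exact ⟨⟨u, hu⟩, ⟨w, hw⟩⟩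
    · rintro ⟨⟨u, hu⟩, ⟨w, hw⟩⟩
      exact ⟨u, w, hu, hw⟩
  rw [Matrix.rank, hcomp, LinearMap.range_comp, LinearMap.range_comp_of_range_eq_top _ e.range,
    hrange]
  rw [LinearEquiv.finrank_map_eq]
  rw [(submoduleProdLEquiv _ _).finrank_eq, Module.finrank_prod]
  rfl

lemma rank_dsum {p q : ℕ} (M : Matrix (Fin p) (Fin p) ℂ) (N : Matrix (Fin q) (Fin q) ℂ) :
    (dsum M N).rank = M.rank + N.rank := by
  rw [dsum, Matrix.rank_reindex, rank_fromBlocksDiag]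
open scoped ComplexOrder in
lemma rank_subDiag_pow (k j : ℕ) : ((subDiag k k) ^ j).rank = k - j := by
  have hdiag : (subDiag k k) ^ j * ((subDiag k k) ^ j)ᴴ =
      Matrix.diagonal (fun i : Fin k => if j ≤ (i : ℕ) then (1 : ℂ) else 0) := by
    ext i i'
    simp only [Matrix.mul_apply, Matrix.conjTranspose_apply, subDiag_pow,
      Matrix.diagonal_apply]
    by_cases hii : i = i'
    · subst hii
      simp only [if_pos rfl]
      by_cases hj : j ≤ (i : ℕ)
      · rw [if_pos hj]
        have hc : (i : ℕ) - j < k := by have := i.2; omega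
        set r₀ : Fin k := ⟨(i : ℕ) - j, hc⟩ with hr₀def
        have hr₀ : (r₀ : ℕ) = (i : ℕ) - j := rfl
        rw [Finset.sum_eq_single r₀]
        · have hcond : (i : ℕ) = (r₀ : ℕ) + j := by omega
          rw [if_pos hcond]
          simp
        · intro r _ hr
          have : (i : ℕ) ≠ (r : ℕ) + j := by
            intro hh
            exact hr (Fin.ext (by omega))
          simp [this]
        · simp
      · rw [if_neg hj]
        apply Finset.sum_eq_zero
        intro r _
        have : (i : ℕ) ≠ (r : ℕ) + j := by omega
        simp [this]
    · rw [if_neg hii]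
      apply Finset.sum_eq_zero
      intro r _
      by_cases h1 : (i : ℕ) = (r : ℕ) + j
      · have : (i' : ℕ) ≠ (r : ℕ) + j := by
          intro hh
          exact hii (Fin.ext (by omega))
        simp [this]
      · simp [h1]
  have h1 : ((subDiag k k) ^ j).rank = (Matrix.diagonal
      (fun i : Fin k => if j ≤ (i : ℕ) then (1 : ℂ) else 0)).rank := by
    rw [← hdiag, Matrix.rank_self_mul_conjTranspose]
  rw [h1, Matrix.rank_diagonal]
  have h2 : ∀ i : Fin k, ((if j ≤ (i : ℕ) then (1 : ℂ) else 0) ≠ 0) ↔ j ≤ (i : ℕ) := by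
    intro i
    split <;> simp [*]
  rw [Fintype.card_congr (Equiv.subtypeEquivRight h2)]
  rw [Fintype.card_congr (show {i : Fin k // j ≤ (i : ℕ)} ≃ Fin (k - j) from
    { toFun := fun x => ⟨(x : Fin k) - j, by have := (x : Fin k).2; have := x.2; omega⟩
      invFun := fun m => ⟨⟨(m : ℕ) + j, by have := m.2; omega⟩, by simp⟩
      left_inv := fun x => by
        ext
        have := x.2
        simp
        omega
      right_inv := fun m => by
        ext
        simp })]
  simp

lemma rank_listJordan_pow (L : List ℕ) (j : ℕ) :
    ((listJordan L) ^ j).rank = (L.map (· - j)).sum := by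
  induction L with
  | nil =>
    have h0 : ((listJordan ([] : List ℕ)) ^ j).rank ≤ 0 := by
      exact (Matrix.rank_le_card_height _).trans
        (le_of_eq (Fintype.card_eq_zero_iff.mpr ⟨fun i => Fin.elim0 i⟩))
    simpa using Nat.le_antisymm h0 (Nat.zero_le _)
  | cons k t ih =>
    show ((dsum (subDiag k k) (listJordan t)) ^ j).rank = _
    rw [dsum_pow, rank_dsum, rank_subDiag_pow, ih]
    simp
lemma dsum_zero_left {s t : ℕ} (M0 : Matrix (Fin 0) (Fin 0) ℂ) (N : Matrix (Fin s) (Fin t) ℂ) :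
    dsum M0 N = castMat (Nat.zero_add s).symm (Nat.zero_add t).symm N := by
  ext i j
  simp only [dsum, castMat, Matrix.reindex_apply, Matrix.submatrix_apply]
  rcases hi : finSumFinEquiv.symm i with i0 | i'
  · exact i0.elim0
  rcases hj : finSumFinEquiv.symm j with j0 | j'
  · exact j0.elim0
  rw [Matrix.fromBlocks_apply₂₂]
  have hi' : (i' : ℕ) = (i : ℕ) := by
    have := congrArg (fun x => ((finSumFinEquiv x : Fin (0 + s)) : ℕ)) hi
    simpa using this.symm
  have hj' : (j' : ℕ) = (j : ℕ) := by
    have := congrArg (fun x => ((finSumFinEquiv x : Fin (0 + t)) : ℕ)) hj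
    simpa using this.symm
  congr 1 <;> exact Fin.ext (by simp [hi', hj'])

lemma sum_filter_pos (L : List ℕ) : (L.filter (fun k => 0 < k)).sum = L.sum := by
  induction L with
  | nil => rfl
  | cons k t ih =>
    by_cases hk : 0 < k
    · rw [List.filter_cons_of_pos (by simpa using hk)]
      simp [ih]
    · rw [List.filter_cons_of_neg (by simpa using hk)]
      have : k = 0 := by omega
      simp [this, ih]

lemma listJordan_filter : ∀ (L L' : List ℕ), L' = L.filter (fun k => 0 < k) →
    ∀ (h : L'.sum = L.sum), listJordan L = castMat h h (listJordan L')
  | [], L', hL, h => by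
    subst hL
    ext i j
    exact i.elim0
  | (k :: t), L', hL, h => by
    by_cases hk : 0 < k
    · rw [List.filter_cons_of_pos (by simpa using hk)] at hL
      subst hL
      have ht : (t.filter (fun k => 0 < k)).sum = t.sum := sum_filter_pos t
      show dsum (subDiag k k) (listJordan t) = _
      rw [listJordan_filter t _ rfl ht, dsum_cast]
      rfl
    · have hk0 : k = 0 := by omega
      subst hk0
      rw [List.filter_cons_of_neg (by simp)] at hL
      have h' : L'.sum = t.sum := by rw [hL, sum_filter_pos]
      show dsum (subDiag 0 0) (listJordan t) = _
      rw [dsum_zero_left, listJordan_filter t L' hL h', castMat_castMat]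
      rfl
lemma GL_inv_mul {n : ℕ} (g : GL (Fin n) ℂ) :
    (↑(g⁻¹) : Matrix (Fin n) (Fin n) ℂ) * (↑g : Matrix (Fin n) (Fin n) ℂ) = 1 :=
  Units.inv_mul g

lemma GL_det_isUnit {n : ℕ} (g : GL (Fin n) ℂ) : IsUnit ((↑g : Matrix (Fin n) (Fin n) ℂ)).det :=
  (Matrix.isUnit_iff_isUnit_det _).mp g.isUnit

lemma GL_sandwich {n : ℕ} (g : GL (Fin n) ℂ) (X : Matrix (Fin n) (Fin n) ℂ) :
    (↑(g⁻¹) : Matrix (Fin n) (Fin n) ℂ) * ((↑g : Matrix (Fin n) (Fin n) ℂ) * X *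
      (↑(g⁻¹) : Matrix (Fin n) (Fin n) ℂ)) * (↑g : Matrix (Fin n) (Fin n) ℂ) = X := by
  have h := GL_inv_mul g
  calc (↑(g⁻¹) : Matrix (Fin n) (Fin n) ℂ) * ((↑g : Matrix (Fin n) (Fin n) ℂ) * X *
      (↑(g⁻¹) : Matrix (Fin n) (Fin n) ℂ)) * (↑g : Matrix (Fin n) (Fin n) ℂ)
      = ((↑(g⁻¹) : Matrix (Fin n) (Fin n) ℂ) * (↑g : Matrix (Fin n) (Fin n) ℂ)) * X *
        ((↑(g⁻¹) : Matrix (Fin n) (Fin n) ℂ) * (↑g : Matrix (Fin n) (Fin n) ℂ)) := by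
        simp only [Matrix.mul_assoc]
    _ = X := by rw [h, Matrix.one_mul, Matrix.mul_one]
lemma GL_conj_mul {m n : ℕ} (g₁ : GL (Fin m) ℂ) (g₂ : GL (Fin n) ℂ)
    (X : Matrix (Fin m) (Fin n) ℂ) (Y : Matrix (Fin n) (Fin m) ℂ) :
    ((↑g₁ : Matrix (Fin m) (Fin m) ℂ) * X * (↑(g₂⁻¹) : Matrix (Fin n) (Fin n) ℂ)) *
      ((↑g₂ : Matrix (Fin n) (Fin n) ℂ) * Y * (↑(g₁⁻¹) : Matrix (Fin m) (Fin m) ℂ)) =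
      (↑g₁ : Matrix (Fin m) (Fin m) ℂ) * (X * Y) * (↑(g₁⁻¹) : Matrix (Fin m) (Fin m) ℂ) := by
  calc ((↑g₁ : Matrix (Fin m) (Fin m) ℂ) * X * (↑(g₂⁻¹) : Matrix (Fin n) (Fin n) ℂ)) *
      ((↑g₂ : Matrix (Fin n) (Fin n) ℂ) * Y * (↑(g₁⁻¹) : Matrix (Fin m) (Fin m) ℂ))
      = (↑g₁ : Matrix (Fin m) (Fin m) ℂ) * (X * (((↑(g₂⁻¹) : Matrix (Fin n) (Fin n) ℂ) *
        (↑g₂ : Matrix (Fin n) (Fin n) ℂ)) * (Y * (↑(g₁⁻¹) : Matrix (Fin m) (Fin m) ℂ)))) := by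
        simp only [Matrix.mul_assoc]
    _ = (↑g₁ : Matrix (Fin m) (Fin m) ℂ) * (X * Y) * (↑(g₁⁻¹) : Matrix (Fin m) (Fin m) ℂ) := by
        rw [GL_inv_mul g₂, Matrix.one_mul]
        simp only [Matrix.mul_assoc]

lemma rank_GL_conj {n : ℕ} (g : GL (Fin n) ℂ) (X : Matrix (Fin n) (Fin n) ℂ) :
    ((↑g : Matrix (Fin n) (Fin n) ℂ) * X * (↑(g⁻¹) : Matrix (Fin n) (Fin n) ℂ)).rank = X.rank := by
  rw [Matrix.rank_mul_eq_left_of_isUnit_det _ _ (GL_det_isUnit (g⁻¹)),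
    Matrix.rank_mul_eq_right_of_isUnit_det _ _ (GL_det_isUnit g)]

lemma GL_conj_pow {n : ℕ} (g : GL (Fin n) ℂ) (X : Matrix (Fin n) (Fin n) ℂ) (j : ℕ) :
    ((↑g : Matrix (Fin n) (Fin n) ℂ) * X * (↑(g⁻¹) : Matrix (Fin n) (Fin n) ℂ)) ^ j =
      (↑g : Matrix (Fin n) (Fin n) ℂ) * X ^ j * (↑(g⁻¹) : Matrix (Fin n) (Fin n) ℂ) :=
  Units.conj_pow g X j

/-- If `(A, B)` lies in the orbit of the direct sum of the elementary pairs attached to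
`γ ∈ DP(m,n)`, then `rank((BA)^j) = ∑_{(x,y)^ε ∈ γ} max(x - j, 0)` and
`rank((AB)^j) = ∑_{(x,y)^ε ∈ γ} max(y - j, 0)`; in particular the multiset of Jordan
block sizes of `B A` is `μ₁†(γ)` and that of `A B` is `μ₂†(γ)`. -/
theorem rank_pow_of_sameOrbit_dirSum (m n : ℕ) (l : List DPair)
    (ha : (l.map DPair.a).sum = m) (hb : (l.map DPair.b).sum = n)
    (A : Matrix (Fin n) (Fin m) ℂ) (B : Matrix (Fin m) (Fin n) ℂ)
    (horb : SameOrbit m n (castMat hb ha (listA l)) (castMat ha hb (listB l)) A B) :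
    (∀ j : ℕ, ((B * A) ^ j).rank = (l.map fun p => p.a - j).sum) ∧
    (∀ j : ℕ, ((A * B) ^ j).rank = (l.map fun p => p.b - j).sum) ∧
    (∃ (lj : List ℕ) (hq : lj.sum = m),
      (lj : Multiset ℕ) = muA (l : Multiset DPair) ∧
      ∃ g : GL (Fin m) ℂ,
        (↑g : Matrix (Fin m) (Fin m) ℂ) * (B * A) * (↑(g⁻¹) : Matrix (Fin m) (Fin m) ℂ) =
          castMat hq hq (listJordan lj)) ∧
    (∃ (lj : List ℕ) (hq : lj.sum = n),
      (lj : Multiset ℕ) = muB (l : Multiset DPair) ∧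
      ∃ g : GL (Fin n) ℂ,
        (↑g : Matrix (Fin n) (Fin n) ℂ) * (A * B) * (↑(g⁻¹) : Matrix (Fin n) (Fin n) ℂ) =
          castMat hq hq (listJordan lj)) := by
  obtain ⟨g₁, g₂, hA, hB⟩ := horb
  have hBA : B * A = (↑g₁ : Matrix (Fin m) (Fin m) ℂ) *
      castMat ha ha (listJordan (l.map DPair.a)) * (↑(g₁⁻¹) : Matrix (Fin m) (Fin m) ℂ) := by
    rw [hA, hB, GL_conj_mul, castMat_mul ha hb ha, listB_mul_listA]
  have hAB : A * B = (↑g₂ : Matrix (Fin n) (Fin n) ℂ) *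
      castMat hb hb (listJordan (l.map DPair.b)) * (↑(g₂⁻¹) : Matrix (Fin n) (Fin n) ℂ) := by
    rw [hA, hB, GL_conj_mul, castMat_mul hb ha hb, listA_mul_listB]
  refine ⟨?_, ?_, ?_, ?_⟩
  · intro j
    rw [hBA, GL_conj_pow, rank_GL_conj, castMat_pow, rank_castMat, rank_listJordan_pow,
      List.map_map]
    rfl
  · intro j
    rw [hAB, GL_conj_pow, rank_GL_conj, castMat_pow, rank_castMat, rank_listJordan_pow,
      List.map_map]
    rfl
  · refine ⟨(l.map DPair.a).filter (fun k => 0 < k), (sum_filter_pos _).trans ha, ?_, g₁⁻¹, ?_⟩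
    · simp [muA, Multiset.map_coe, Multiset.filter_coe]
    · rw [inv_inv, hBA, GL_sandwich,
        listJordan_filter (l.map DPair.a) _ rfl (sum_filter_pos _), castMat_castMat]
  · refine ⟨(l.map DPair.b).filter (fun k => 0 < k), (sum_filter_pos _).trans hb, ?_, g₂⁻¹, ?_⟩
    · simp [muB, Multiset.map_coe, Multiset.filter_coe]
    · rw [inv_inv, hAB, GL_sandwich,
        listJordan_filter (l.map DPair.b) _ rfl (sum_filter_pos _), castMat_castMat]
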